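/- Let 𝒳 = 𝒳₁ ∪ 𝒳₂ ⊂ ℝⁿ be disjoint finite sets, and suppose there exists an n-simplex S (convex hull of n+1 affinely independent points) with 𝒳₁ ⊂ S and 𝒳₂ ∩ S = ∅. Then there exist an invertible linear map W ∈ GL(n+1, ℝ) and b ∈ ℝ^{n+1} such that τ_{W,b}(ι(𝒳₁)) and τ_{W,b}(ι(𝒳₂)) are linearly separable in ℝ^{n+1}, where ι : ℝⁿ ↪ ℝ^{n+1} is the standard inclusion. -/

import Mathlib

noncomputable section

/-- Componentwise ReLU. -/
def relu {m : ℕ} (y : EuclideanSpace ℝ (Fin m)) : EuclideanSpace ℝ (Fin m) :=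
  WithLp.toLp 2 (fun i => max (y i) 0)

/-- Truncation map τ_{W,b}(x) = W⁺(σ(Wx + b) - b), with `Wp` playing the role of W⁺. -/
def trunc {n m : ℕ} (W : EuclideanSpace ℝ (Fin n) →ₗ[ℝ] EuclideanSpace ℝ (Fin m))
    (Wp : EuclideanSpace ℝ (Fin m) →ₗ[ℝ] EuclideanSpace ℝ (Fin n))
    (b : EuclideanSpace ℝ (Fin m)) (x : EuclideanSpace ℝ (Fin n)) :
    EuclideanSpace ℝ (Fin n) :=
  Wp (relu (W x + b) - b)

/-- Truncation map for invertible W: τ_{W,b}(x) = W⁻¹(σ(Wx + b) - b). -/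
def truncE {n : ℕ} (W : EuclideanSpace ℝ (Fin n) ≃ₗ[ℝ] EuclideanSpace ℝ (Fin n))
    (b x : EuclideanSpace ℝ (Fin n)) : EuclideanSpace ℝ (Fin n) :=
  W.symm (relu (W x + b) - b)

/-- The standard inclusion ι : ℝⁿ → ℝᵐ sending eᵢⁿ to eᵢᵐ (padding with zeros). -/
def incl (n m : ℕ) : EuclideanSpace ℝ (Fin n) →ₗ[ℝ] EuclideanSpace ℝ (Fin m) where
  toFun x := WithLp.toLp 2 (fun i => if h : (i : ℕ) < n then x ⟨i, h⟩ else 0)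
  map_add' x y := PiLp.ext fun i => by by_cases h : (i : ℕ) < n <;> simp [h]
  map_smul' c x := PiLp.ext fun i => by by_cases h : (i : ℕ) < n <;> simp [h]

lemma incl_castSucc {n : ℕ} (x : EuclideanSpace ℝ (Fin n)) (j : Fin n) :
    incl n (n + 1) x j.castSucc = x j := by
  simp [incl, j.isLt]

lemma incl_last {n : ℕ} (x : EuclideanSpace ℝ (Fin n)) :
    incl n (n + 1) x (Fin.last n) = 0 := by
  simp [incl]

/-- concentric-type data separated by a simplex becomes linearly separable
after inclusion into ℝ^{n+1} and one truncation map. -/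
theorem trunc_separates_simplex_data {n : ℕ}
    (X₁ X₂ : Set (EuclideanSpace ℝ (Fin n)))
    (hX₁ : X₁.Finite) (hX₂ : X₂.Finite) (hdisj : Disjoint X₁ X₂)
    (s : Fin (n + 1) → EuclideanSpace ℝ (Fin n))
    (hs : AffineIndependent ℝ s)
    (S : Set (EuclideanSpace ℝ (Fin n)))
    (hS : S = convexHull ℝ (Set.range s))
    (hX₁S : X₁ ⊆ S) (hX₂S : X₂ ∩ S = ∅) :
    ∃ (W : EuclideanSpace ℝ (Fin (n + 1)) ≃ₗ[ℝ] EuclideanSpace ℝ (Fin (n + 1)))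
      (b : EuclideanSpace ℝ (Fin (n + 1)))
      (u : EuclideanSpace ℝ (Fin (n + 1))) (c : ℝ),
      (∀ x ∈ X₁, (inner ℝ u (truncE W b (incl n (n + 1) x)) : ℝ) < c) ∧
      (∀ x ∈ X₂, c < (inner ℝ u (truncE W b (incl n (n + 1) x)) : ℝ)) := by
  classical
  -- the affine basis given by the simplex vertices
  let B : AffineBasis (Fin (n + 1)) ℝ (EuclideanSpace ℝ (Fin n)) :=
    ⟨s, hs, hs.affineSpan_eq_top_iff_card_eq_finrank_add_one.mpr (by
      simp [finrank_euclideanSpace_fin])⟩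
  -- the vector b of constant terms of the barycentric coordinates
  let b : EuclideanSpace ℝ (Fin (n + 1)) := WithLp.toLp 2 (fun i => B.coord i 0)
  have hsumb : ∑ i, b i = 1 := B.sum_coord_apply_eq_one 0
  have hdec : ∀ (i : Fin (n + 1)) (v : EuclideanSpace ℝ (Fin n)),
      B.coord i v = (B.coord i).linear v + b i := fun i v => by
    have := congrFun (AffineMap.decomp (B.coord i)) v
    simpa using this
  have hsumlin : ∀ v : EuclideanSpace ℝ (Fin n), ∑ i, (B.coord i).linear v = 0 := by
    intro v
    have h1 : ∑ i, B.coord i v = 1 := B.sum_coord_apply_eq_one v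
    have : ∑ i, ((B.coord i).linear v + b i) = 1 := by
      rw [← Finset.sum_congr rfl fun i _ => (hdec i v)]; exact h1
    rw [Finset.sum_add_distrib, hsumb] at this
    linarith
  -- the linear map W
  have harg : ∀ z w : EuclideanSpace ℝ (Fin (n + 1)),
      (WithLp.toLp 2 (fun j : Fin n => (z + w) j.castSucc) : EuclideanSpace ℝ (Fin n)) =
        (WithLp.toLp 2 (fun j : Fin n => z j.castSucc)) + WithLp.toLp 2 (fun j : Fin n => w j.castSucc) := fun z w => rfl
  have hargs : ∀ (c : ℝ) (z : EuclideanSpace ℝ (Fin (n + 1))),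
      (WithLp.toLp 2 (fun j : Fin n => (c • z) j.castSucc) : EuclideanSpace ℝ (Fin n)) =
        c • WithLp.toLp 2 (fun j : Fin n => z j.castSucc) := fun c z => rfl
  let Wmap : EuclideanSpace ℝ (Fin (n + 1)) →ₗ[ℝ] EuclideanSpace ℝ (Fin (n + 1)) :=
    { toFun := fun z => WithLp.toLp 2 fun i =>
        (B.coord i).linear (WithLp.toLp 2 (fun j : Fin n => z j.castSucc)) + z (Fin.last n) * b i
      map_add' := fun z w => PiLp.ext fun i => by
        show (B.coord i).linear (WithLp.toLp 2 (fun j : Fin n => (z + w) j.castSucc)) + (z + w) (Fin.last n) * b i = _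
        rw [harg, map_add]
        show _ = ((B.coord i).linear (WithLp.toLp 2 (fun j : Fin n => z j.castSucc)) + z (Fin.last n) * b i)
          + ((B.coord i).linear (WithLp.toLp 2 (fun j : Fin n => w j.castSucc)) + w (Fin.last n) * b i)
        have : (z + w) (Fin.last n) = z (Fin.last n) + w (Fin.last n) := rfl
        rw [this]; ring
      map_smul' := fun c z => PiLp.ext fun i => by
        show (B.coord i).linear (WithLp.toLp 2 (fun j : Fin n => (c • z) j.castSucc)) + (c • z) (Fin.last n) * b i = _
        rw [hargs, map_smul]
        show _ = c • ((B.coord i).linear (WithLp.toLp 2 (fun j : Fin n => z j.castSucc)) + z (Fin.last n) * b i)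
        have : (c • z) (Fin.last n) = c * z (Fin.last n) := rfl
        rw [this]; simp [smul_eq_mul]; ring }
  -- W is injective, hence bijective
  have hWinj : Function.Injective Wmap := by
    rw [injective_iff_map_eq_zero]
    intro z hz
    have hz' : ∀ i, (B.coord i).linear (WithLp.toLp 2 (fun j : Fin n => z j.castSucc)) + z (Fin.last n) * b i = 0 := by
      intro i; exact congrArg (fun v => v i) hz
    have hsum : z (Fin.last n) = 0 := by
      have := Finset.sum_congr rfl fun i (_ : i ∈ Finset.univ) => hz' i
      rw [Finset.sum_add_distrib, hsumlin, ← Finset.mul_sum, hsumb] at this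
      simpa using this
    have hlin : ∀ i, (B.coord i).linear (WithLp.toLp 2 (fun j : Fin n => z j.castSucc)) = 0 := by
      intro i; have := hz' i; rw [hsum] at this; simpa using this
    have hcoord : ∀ i, B.coord i (WithLp.toLp 2 (fun j : Fin n => z j.castSucc)) = B.coord i 0 := by
      intro i; rw [hdec, hlin, zero_add]
    have hz0 : (WithLp.toLp 2 (fun j : Fin n => z j.castSucc) : EuclideanSpace ℝ (Fin n)) = 0 :=
      B.ext_elem hcoord
    ext i
    refine Fin.lastCases ?_ ?_ i
    · exact hsum
    · intro j; exact congrArg (fun v => v j) hz0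
  let W : EuclideanSpace ℝ (Fin (n + 1)) ≃ₗ[ℝ] EuclideanSpace ℝ (Fin (n + 1)) :=
    LinearEquiv.ofBijective Wmap
      ⟨hWinj, (LinearMap.injective_iff_surjective).mp hWinj⟩
  -- the separating functional
  let G : EuclideanSpace ℝ (Fin (n + 1)) →ₗ[ℝ] ℝ :=
    { toFun := fun z => ∑ i, z i
      map_add' := fun z w => by
        show ∑ i, (z + w) i = _
        simp [Finset.sum_add_distrib, PiLp.add_apply]
      map_smul' := fun c z => by
        show ∑ i, (c • z) i = _
        simp [Finset.mul_sum, PiLp.smul_apply, smul_eq_mul] }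
  let F : EuclideanSpace ℝ (Fin (n + 1)) →ₗ[ℝ] ℝ := G.comp (Wmap : _)
  let u : EuclideanSpace ℝ (Fin (n + 1)) :=
    (InnerProductSpace.toDual ℝ _).symm (LinearMap.toContinuousLinearMap F)
  -- key formula for the inner product
  have hWincl : ∀ (x : EuclideanSpace ℝ (Fin n)) (i : Fin (n + 1)),
      (Wmap (incl n (n + 1) x) + b) i = B.coord i x := by
    intro x i
    have h1 : (WithLp.toLp 2 (fun j : Fin n => (incl n (n + 1) x) j.castSucc) : EuclideanSpace ℝ (Fin n)) = x :=
      PiLp.ext fun j => incl_castSucc x j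
    have h2 : (Wmap (incl n (n + 1) x) + b) i = Wmap (incl n (n + 1) x) i + b i := rfl
    rw [h2]
    show ((B.coord i).linear (WithLp.toLp 2 (fun j : Fin n => (incl n (n + 1) x) j.castSucc))
      + (incl n (n + 1) x) (Fin.last n) * b i) + b i = _
    rw [h1, incl_last, hdec i x]; ring
  have hkey : ∀ x : EuclideanSpace ℝ (Fin n),
      (inner ℝ u (truncE W b (incl n (n + 1) x)) : ℝ)
        = (∑ i, max (B.coord i x) 0) - 1 := by
    intro x
    have h0 : (inner ℝ u (truncE W b (incl n (n + 1) x)) : ℝ)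
        = F (truncE W b (incl n (n + 1) x)) :=
      InnerProductSpace.toDual_symm_apply
    rw [h0]
    show G (Wmap (W.symm (relu (W (incl n (n + 1) x) + b) - b))) = _
    have h1 : Wmap (W.symm (relu (W (incl n (n + 1) x) + b) - b))
        = relu (W (incl n (n + 1) x) + b) - b :=
      W.apply_symm_apply _
    rw [h1]
    show ∑ i, (relu (W (incl n (n + 1) x) + b) - b) i = _
    have h2 : ∀ i : Fin (n + 1), (relu (W (incl n (n + 1) x) + b) - b) i
        = max (B.coord i x) 0 - b i := by
      intro i
      have : (relu (W (incl n (n + 1) x) + b) - b) i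
          = relu (W (incl n (n + 1) x) + b) i - b i := rfl
      rw [this]
      show max ((W (incl n (n + 1) x) + b) i) 0 - b i = _
      have : (W (incl n (n + 1) x) + b) i = B.coord i x := hWincl x i
      rw [this]
    rw [Finset.sum_congr rfl fun i _ => h2 i, Finset.sum_sub_distrib, hsumb]
  -- membership characterization
  have hmem : ∀ x : EuclideanSpace ℝ (Fin n), x ∈ S ↔ ∀ i, 0 ≤ B.coord i x := by
    intro x
    rw [hS]
    have hrange : Set.range s = Set.range (B : Fin (n + 1) → EuclideanSpace ℝ (Fin n)) := rfl
    rw [hrange, B.convexHull_eq_nonneg_coord]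
    rfl
  -- value is 0 on S
  have hval1 : ∀ x ∈ S, (inner ℝ u (truncE W b (incl n (n + 1) x)) : ℝ) = 0 := by
    intro x hx
    rw [hkey]
    have h := (hmem x).mp hx
    have : ∀ i : Fin (n + 1), max (B.coord i x) 0 = B.coord i x := fun i => max_eq_left (h i)
    rw [Finset.sum_congr rfl fun i _ => this i, B.sum_coord_apply_eq_one]
    ring
  -- value is positive off S
  have hval2 : ∀ x : EuclideanSpace ℝ (Fin n), x ∉ S →
      0 < (inner ℝ u (truncE W b (incl n (n + 1) x)) : ℝ) := by
    intro x hx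
    rw [hkey]
    obtain ⟨i₀, hi₀⟩ : ∃ i, B.coord i x < 0 := by
      by_contra h
      push_neg at h
      exact hx ((hmem x).mpr h)
    have heq : (∑ i, max (B.coord i x) 0) - 1
        = ∑ i, (max (B.coord i x) 0 - B.coord i x) := by
      rw [Finset.sum_sub_distrib, B.sum_coord_apply_eq_one]
    rw [heq]
    refine Finset.sum_pos' (fun i _ => by simp [le_max_right]) ⟨i₀, Finset.mem_univ i₀, ?_⟩
    have : max (B.coord i₀ x) 0 = 0 := max_eq_right hi₀.le
    rw [this]; linarith
  -- choose the threshold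
  rcases X₂.eq_empty_or_nonempty with h2e | h2ne
  · refine ⟨W, b, u, 1, fun x hx => ?_, fun x hx => ?_⟩
    · rw [hval1 x (hX₁S hx)]; norm_num
    · rw [h2e] at hx; exact absurd hx (Set.notMem_empty x)
  · obtain ⟨a, ha, hamin⟩ := Set.exists_min_image X₂
      (fun x => (inner ℝ u (truncE W b (incl n (n + 1) x)) : ℝ)) hX₂ h2ne
    have haS : a ∉ S := fun hmemS =>
      (Set.eq_empty_iff_forall_notMem.mp hX₂S a) ⟨ha, hmemS⟩
    have hapos := hval2 a haS
    refine ⟨W, b, u, (inner ℝ u (truncE W b (incl n (n + 1) a)) : ℝ) / 2,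
      fun x hx => ?_, fun x hx => ?_⟩
    · rw [hval1 x (hX₁S hx)]; linarith
    · have := hamin x hx
      linarith
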